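/- Let B ∈ SL(N,ℤ) with no eigenvalue of modulus 1. Then the set of solutions x ∈ ℝ^N of x = (I - Bⁿ)⁻¹ b, ranging over b ∈ ℤ^N and n ∈ ℤ \ {0}, is dense in ℝ^N. -/

import Mathlib

open Matrix

/-- Integer power of a matrix, using the nonsingular inverse for negative exponents. -/
noncomputable def mzpow {N : ℕ} (A : Matrix (Fin N) (Fin N) ℝ) : ℤ → Matrix (Fin N) (Fin N) ℝ
  | (Int.ofNat n) => A ^ n
  | (Int.negSucc n) => A⁻¹ ^ (n + 1)

/-- In a finite ring, a matrix with unit determinant has some positive power equal to `1`. -/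
lemma pow_eq_one_of_isUnit_det {N q : ℕ} [NeZero q] (A : Matrix (Fin N) (Fin N) (ZMod q))
    (h : IsUnit A.det) : ∃ m : ℕ, 0 < m ∧ A ^ m = 1 := by
  have : IsUnit A := (Matrix.isUnit_iff_isUnit_det A).2 h
  obtain ⟨u, rfl⟩ := this
  refine ⟨orderOf u, orderOf_pos u, ?_⟩
  rw [← Units.val_pow_eq_pow_val, pow_orderOf_eq_one, Units.val_one]

/-- Let `B ∈ SL(N,ℤ)` with no eigenvalue of modulus `1`. Then the set of solutions
`x = (I - Bⁿ)⁻¹ b`, `b ∈ ℤ^N`, `n ∈ ℤ \ {0}` (the points with nontrivial isotropy for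
the affine action of `ℤ^N ⋊_B ℤ` on `ℝ^N`), is dense in `ℝ^N`. -/
theorem fixed_points_dense {N : ℕ} (B : Matrix (Fin N) (Fin N) ℤ)
    (hdet : B.det = 1)
    (hhyp : ∀ μ ∈ spectrum ℂ (B.map (fun k => (k : ℂ))), ‖μ‖ ≠ 1) :
    Dense {z : Fin N → ℝ | ∃ (b : Fin N → ℤ) (n : ℤ), n ≠ 0 ∧
      z = ((1 - mzpow (B.map (fun k => (k : ℝ))) n)⁻¹).mulVec (fun i => (b i : ℝ))} := by
  set B' : Matrix (Fin N) (Fin N) ℝ := B.map (fun k => (k : ℝ)) with hB'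
  -- Key invertibility: for m > 0, `1 - B'^m` has nonzero determinant.
  have key : ∀ m : ℕ, 0 < m → IsUnit (1 - B' ^ m).det := by
    intro m hm
    rw [isUnit_iff_ne_zero]
    intro h0
    set Bc : Matrix (Fin N) (Fin N) ℂ := B.map (fun k => (k : ℂ)) with hBc
    have hmapM : (1 - B' ^ m).map (algebraMap ℝ ℂ) = 1 - Bc ^ m := by
      have h1 : (1 - B' ^ m).map (algebraMap ℝ ℂ)
          = (RingHom.mapMatrix (algebraMap ℝ ℂ)) (1 - B' ^ m) := by
        rw [RingHom.mapMatrix_apply]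
      rw [h1, map_sub, _root_.map_one, map_pow, RingHom.mapMatrix_apply]
      have h2 : B'.map (algebraMap ℝ ℂ) = Bc := by
        rw [hB', hBc, Matrix.map_map]
        ext i j
        simp [Matrix.map_apply, Function.comp]
      rw [h2]
    have hcomm := RingHom.map_det (algebraMap ℝ ℂ) (1 - B' ^ m)
    rw [RingHom.mapMatrix_apply] at hcomm
    have hdet0 : (1 - Bc ^ m).det = 0 := by
      rw [← hmapM, ← hcomm, h0, map_zero]
    have hnu : ¬ IsUnit (1 - Bc ^ m) := by
      intro h
      have := (Matrix.isUnit_iff_isUnit_det _).1 h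
      rw [hdet0] at this
      exact not_isUnit_zero this
    have hmem : (1 : ℂ) ∈ spectrum ℂ (Bc ^ m) := by
      rw [spectrum.mem_iff, _root_.map_one]
      exact hnu
    rw [spectrum.map_pow_of_pos Bc hm] at hmem
    obtain ⟨μ, hμ, hpow⟩ := hmem
    have hpow' : μ ^ m = 1 := hpow
    have habs : ‖μ‖ ^ m = 1 := by
      rw [← norm_pow, hpow', norm_one]
    rcases (pow_eq_one_iff_cases.mp habs) with h1 | h1 | h1
    · omega
    · exact hhyp μ hμ h1
    · have h2 : (0:ℝ) ≤ ‖μ‖ := norm_nonneg _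
      rw [h1.1] at h2; norm_num at h2
  -- Density
  rw [Metric.dense_iff]
  intro x r hr
  obtain ⟨q, hq⟩ := exists_nat_gt (1 / r)
  have hq0R : (0:ℝ) < q := (div_pos one_pos hr).trans hq
  have hq0 : 0 < q := by exact_mod_cast hq0R
  have hinvq : 1 / (q:ℝ) < r := by
    rw [div_lt_iff₀ hq0R]
    have := (div_lt_iff₀ hr).mp hq
    linarith
  haveI : NeZero q := ⟨hq0.ne'⟩
  -- the matrix mod q has a positive power equal to 1
  have hdetq : IsUnit (B.map (Int.cast : ℤ → ZMod q)).det := by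
    have h1 : B.map (Int.cast : ℤ → ZMod q) = (Int.castRingHom (ZMod q)).mapMatrix B := rfl
    rw [h1, ← RingHom.map_det, hdet]
    simp
  obtain ⟨m, hm, hAm⟩ := pow_eq_one_of_isUnit_det _ hdetq
  -- divisibility of entries of B^m - 1 by q
  have hdvd : ∀ i j, (q : ℤ) ∣ (B ^ m - 1) i j := by
    intro i j
    have h0 : ((B ^ m - 1).map (Int.cast : ℤ → ZMod q)) = 0 := by
      have h1 : (B ^ m - 1).map (Int.cast : ℤ → ZMod q)
          = (RingHom.mapMatrix (Int.castRingHom (ZMod q))) (B ^ m - 1) := rfl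
      rw [h1, map_sub, _root_.map_one, map_pow, RingHom.mapMatrix_apply]
      have h2 : B.map (⇑(Int.castRingHom (ZMod q))) = B.map (Int.cast : ℤ → ZMod q) := rfl
      rw [h2, hAm]
      simp
    have h3 := congrFun (congrFun h0 i) j
    rw [Matrix.map_apply] at h3
    exact (ZMod.intCast_zmod_eq_zero_iff_dvd _ q).1 h3
  -- approximation vector
  set v : Fin N → ℤ := fun i => ⌊x i * q⌋ with hv
  have hdvdVec : ∀ i, (q : ℤ) ∣ (1 - B ^ m).mulVec v i := by
    intro i
    rw [Matrix.mulVec, dotProduct]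
    apply Finset.dvd_sum
    intro j _
    refine dvd_mul_of_dvd_left ?_ _
    have h4 : (1 - B ^ m) i j = -((B ^ m - 1) i j) := by
      simp [Matrix.sub_apply]
    rw [h4]
    exact dvd_neg.2 (hdvd i j)
  set c : Fin N → ℤ := fun i => ((1 - B ^ m).mulVec v i) / q with hc
  have hqc : ∀ i, (q : ℤ) * c i = (1 - B ^ m).mulVec v i := by
    intro i
    rw [hc]
    exact Int.mul_ediv_cancel' (hdvdVec i)
  set z : Fin N → ℝ := fun i => (v i : ℝ) / q with hz
  refine ⟨z, ?_, ⟨c, (m : ℤ), ?_, ?_⟩⟩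
  · -- z is in the ball
    rw [Metric.mem_ball, dist_pi_lt_iff hr]
    intro i
    rw [Real.dist_eq, hz]
    have hfl : |x i * q - ⌊x i * q⌋| < 1 := by
      rw [abs_of_nonneg (by linarith [Int.floor_le (x i * q)])]
      linarith [Int.lt_floor_add_one (x i * q)]
    have h5 : |(v i : ℝ) / q - x i| = |x i * q - (v i : ℝ)| / q := by
      rw [← abs_neg, eq_div_iff hq0R.ne', ← abs_of_pos hq0R, ← abs_mul]
      congr 1
      field_simp
      rw [abs_of_pos hq0R]
      ring
    rw [h5, hv]
    calc |x i * q - ((⌊x i * q⌋ : ℤ) : ℝ)| / q < 1 / q := by gcongr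
      _ < r := hinvq
  · exact_mod_cast hm.ne'
  · -- z is a fixed point
    have hmz : mzpow B' (m : ℤ) = B' ^ m := rfl
    rw [hmz]
    set M : Matrix (Fin N) (Fin N) ℝ := 1 - B' ^ m with hM
    have hMu : IsUnit M.det := key m hm
    -- M maps z to c
    have hMz : M.mulVec z = fun i => (c i : ℝ) := by
      funext i
      have hMcast : M = ((1 : Matrix (Fin N) (Fin N) ℤ) - B ^ m).map (fun k => (k : ℝ)) := by
        have h1 : ((1 : Matrix (Fin N) (Fin N) ℤ) - B ^ m).map (Int.cast : ℤ → ℝ)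
            = (RingHom.mapMatrix (Int.castRingHom ℝ)) (1 - B ^ m) := rfl
        rw [hM, h1, map_sub, _root_.map_one, map_pow, RingHom.mapMatrix_apply]
        rfl
      rw [hMcast]
      have key2 : (((1 - B ^ m).map (fun k => ((k : ℤ) : ℝ))).mulVec z) i
          = (((1 - B ^ m).mulVec v i : ℤ) : ℝ) / q := by
        simp only [Matrix.mulVec, dotProduct, Matrix.map_apply, hz]
        push_cast
        rw [Finset.sum_div]
        exact Finset.sum_congr rfl (fun j _ => by ring)
      rw [key2, ← hqc i]
      push_cast
      field_simp
    -- conclude z = M⁻¹ c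
    rw [← hMz, Matrix.mulVec_mulVec, Matrix.nonsing_inv_mul M hMu, Matrix.one_mulVec]
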